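/- Let N ≥ 1, κ̄ > 0, and let ρ : ℝ^N → ℝ be a C³ function with ρ(x) > 0 for all x. For the capillarity coefficient κ(ρ) = κ̄/ρ, one has for every x ∈ ℝ^N and every j ∈ {1, …, N}: (div K)_j(x) = κ̄ ρ(x) ( ∂_j(Δ(ln ρ))(x) + ½ ∂_j(|∇(ln ρ)|²)(x) ), where (div K)_j = ∂_j( ρκ(ρ)Δρ + ½(κ(ρ) + ρκ'(ρ))|∇ρ|² ) − Σ_{i=1}^N ∂_i( κ(ρ) ∂_iρ ∂_jρ ). -/

import Mathlib

open Real

/-- The `i`-th partial derivative of a function on `ℝ^N`. -/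
noncomputable def pd {N : ℕ} (i : Fin N) (f : (Fin N → ℝ) → ℝ) : (Fin N → ℝ) → ℝ :=
  fun x => fderiv ℝ f x (Pi.single i 1)

/-- The Laplacian on `ℝ^N`. -/
noncomputable def lap {N : ℕ} (f : (Fin N → ℝ) → ℝ) : (Fin N → ℝ) → ℝ :=
  fun x => ∑ i, pd i (pd i f) x

/-- The squared norm of the gradient, `|∇f|²`. -/
noncomputable def gradsq {N : ℕ} (f : (Fin N → ℝ) → ℝ) : (Fin N → ℝ) → ℝ :=
  fun x => ∑ i, (pd i f x) ^ 2

section helpers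
variable {N : ℕ} {f g : (Fin N → ℝ) → ℝ} {x : Fin N → ℝ} {i : Fin N}

lemma contDiff_pd {n : WithTop ℕ∞} (i : Fin N) (h : ContDiff ℝ (n+1) f) :
    ContDiff ℝ n (pd i f) :=
  (h.fderiv_right le_rfl).clm_apply contDiff_const

lemma pd_sub (hf : DifferentiableAt ℝ f x) (hg : DifferentiableAt ℝ g x) :
    pd i (fun y => f y - g y) x = pd i f x - pd i g x := by
  simp [pd, fderiv_fun_sub hf hg]

lemma pd_mul (hf : DifferentiableAt ℝ f x) (hg : DifferentiableAt ℝ g x) :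
    pd i (fun y => f y * g y) x = pd i f x * g x + f x * pd i g x := by
  simp [pd, fderiv_fun_mul hf hg]; ring

lemma pd_const_mul (hf : DifferentiableAt ℝ f x) (c : ℝ) :
    pd i (fun y => c * f y) x = c * pd i f x := by
  simp [pd, fderiv_const_mul hf c]

lemma pd_sum {ι : Type*} (s : Finset ι) (F : ι → (Fin N → ℝ) → ℝ)
    (h : ∀ k ∈ s, DifferentiableAt ℝ (F k) x) :
    pd i (fun y => ∑ k ∈ s, F k y) x = ∑ k ∈ s, pd i (F k) x := by
  simp [pd, fderiv_fun_sum h]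

lemma pd_inv (hf : DifferentiableAt ℝ f x) (h0 : f x ≠ 0) :
    pd i (fun y => (f y)⁻¹) x = -pd i f x / f x ^ 2 := by
  have := ((hasDerivAt_inv h0).comp_hasFDerivAt x hf.hasFDerivAt).fderiv
  have h2 : (fun y => (f y)⁻¹) = (fun y => y⁻¹) ∘ f := rfl
  rw [pd, h2, this]
  simp only [ContinuousLinearMap.coe_smul', Pi.smul_apply, smul_eq_mul]
  rw [pd]
  ring

lemma pd_log (hf : DifferentiableAt ℝ f x) (h0 : f x ≠ 0) :
    pd i (fun y => Real.log (f y)) x = pd i f x / f x := by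
  have := (hf.hasFDerivAt.log h0).fderiv
  simp [pd, this]
  ring

lemma pd_sq (hf : DifferentiableAt ℝ f x) :
    pd i (fun y => (f y) ^ 2) x = 2 * f x * pd i f x := by
  have h : (fun y => (f y) ^ 2) = fun y => f y * f y := by funext y; ring
  rw [h, pd_mul hf hf]; ring

lemma pd_comm (h : ContDiff ℝ 2 f) (k i : Fin N) (x : Fin N → ℝ) :
    pd k (pd i f) x = pd i (pd k f) x := by
  have hd : DifferentiableAt ℝ (fderiv ℝ f) x :=
    ((h.fderiv_right (by norm_num : (1 : WithTop ℕ∞) + 1 ≤ 2)).differentiable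
      one_ne_zero).differentiableAt
  have key : ∀ v w, fderiv ℝ (fun y => fderiv ℝ f y v) x w = fderiv ℝ (fderiv ℝ f) x w v := by
    intro v w
    rw [fderiv_clm_apply hd (differentiableAt_const v)]
    simp
  have hsym : IsSymmSndFDerivAt ℝ f x := h.contDiffAt.isSymmSndFDerivAt (by norm_num)
  show fderiv ℝ (fun y => fderiv ℝ f y (Pi.single i 1)) x (Pi.single k 1)
      = fderiv ℝ (fun y => fderiv ℝ f y (Pi.single k 1)) x (Pi.single i 1)
  rw [key, key]
  exact hsym _ _

end helpers

/-- For the capillarity coefficient `κ(ρ) = κ̄/ρ` (so `κ'(ρ) = -κ̄/ρ²`), the divergence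
of the Korteweg tensor satisfies
`(div K)_j = κ̄ ρ ( ∂_j Δ(ln ρ) + ½ ∂_j |∇(ln ρ)|² )`. -/
theorem divK_eq_logForm (N : ℕ) (hN : 1 ≤ N) (κb : ℝ) (hκb : 0 < κb)
    (ρ : (Fin N → ℝ) → ℝ) (hρ : ContDiff ℝ 3 ρ) (hpos : ∀ x, 0 < ρ x)
    (x : Fin N → ℝ) (j : Fin N) :
    pd j (fun y => ρ y * (κb / ρ y) * lap ρ y
        + (1 / 2) * ((κb / ρ y) + ρ y * (-κb / (ρ y) ^ 2)) * gradsq ρ y) x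
      - ∑ i, pd i (fun y => (κb / ρ y) * pd i ρ y * pd j ρ y) x
    = κb * ρ x * (pd j (lap (fun y => Real.log (ρ y))) x
        + (1 / 2) * pd j (gradsq (fun y => Real.log (ρ y))) x) := by
  have h0 : ∀ y, ρ y ≠ 0 := fun y => (hpos y).ne'
  have hρ2 : ContDiff ℝ 2 ρ := hρ.of_le (by norm_num)
  have cd2 : ∀ i : Fin N, ContDiff ℝ 2 (pd i ρ) := fun i =>
    contDiff_pd i (hρ.of_le (by norm_num))
  have cd1 : ∀ i k : Fin N, ContDiff ℝ 1 (pd k (pd i ρ)) := fun i k =>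
    contDiff_pd k ((cd2 i).of_le (by norm_num))
  have dρ : ∀ y, DifferentiableAt ℝ ρ y := fun y =>
    (hρ.differentiable (by norm_num)).differentiableAt
  have d1 : ∀ (i : Fin N) y, DifferentiableAt ℝ (pd i ρ) y := fun i y =>
    ((cd2 i).differentiable (by norm_num)).differentiableAt
  have d2 : ∀ (i k : Fin N) y, DifferentiableAt ℝ (pd k (pd i ρ)) y := fun i k y =>
    ((cd1 i k).differentiable (by norm_num)).differentiableAt
  have dinv : ∀ y, DifferentiableAt ℝ (fun z => (ρ z)⁻¹) y := fun y =>
    (dρ y).inv (h0 y)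
  have dinv2 : ∀ y, DifferentiableAt ℝ (fun z => ((ρ z) ^ 2)⁻¹) y := fun y =>
    ((dρ y).pow 2).inv (pow_ne_zero 2 (h0 y))
  have dlap : ∀ y, DifferentiableAt ℝ (lap ρ) y := fun y =>
    DifferentiableAt.fun_sum fun i _ => d2 i i y
  have dgrad : ∀ y, DifferentiableAt ℝ (gradsq ρ) y := fun y =>
    DifferentiableAt.fun_sum fun i _ => (d1 i y).pow 2
  -- the log function and its partials
  have hL1 : ∀ i : Fin N, pd i (fun y => Real.log (ρ y)) = fun z => pd i ρ z * (ρ z)⁻¹ := by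
    intro i; funext z; rw [pd_log (dρ z) (h0 z), div_eq_mul_inv]
  have hlapL : lap (fun y => Real.log (ρ y))
      = fun y => lap ρ y * (ρ y)⁻¹ - gradsq ρ y * ((ρ y) ^ 2)⁻¹ := by
    funext y
    show ∑ i, pd i (pd i (fun y => Real.log (ρ y))) y = _
    calc ∑ i, pd i (pd i (fun y => Real.log (ρ y))) y
        = ∑ i, (pd i (pd i ρ) y * (ρ y)⁻¹ - (pd i ρ y) ^ 2 * ((ρ y) ^ 2)⁻¹) := by
          refine Finset.sum_congr rfl fun i _ => ?_
          rw [hL1 i, pd_mul (d1 i y) (dinv y), pd_inv (dρ y) (h0 y)]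
          field_simp
          ring
      _ = lap ρ y * (ρ y)⁻¹ - gradsq ρ y * ((ρ y) ^ 2)⁻¹ := by
          rw [Finset.sum_sub_distrib, ← Finset.sum_mul, ← Finset.sum_mul]
          rfl
  have hgradL : gradsq (fun y => Real.log (ρ y))
      = fun y => gradsq ρ y * ((ρ y) ^ 2)⁻¹ := by
    funext y
    show ∑ i, (pd i (fun y => Real.log (ρ y)) y) ^ 2 = _
    calc ∑ i, (pd i (fun y => Real.log (ρ y)) y) ^ 2
        = ∑ i, (pd i ρ y) ^ 2 * ((ρ y) ^ 2)⁻¹ := by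
          refine Finset.sum_congr rfl fun i _ => ?_
          rw [hL1 i]
          rw [mul_pow, inv_pow]
      _ = gradsq ρ y * ((ρ y) ^ 2)⁻¹ := by rw [← Finset.sum_mul]; rfl
  -- first term
  have e1 : (fun y => ρ y * (κb / ρ y) * lap ρ y
      + (1 / 2) * ((κb / ρ y) + ρ y * (-κb / (ρ y) ^ 2)) * gradsq ρ y)
      = fun y => κb * lap ρ y := by
    funext y
    have := h0 y
    field_simp
    ring
  -- the sum term
  have hterm : ∀ i : Fin N, pd i (fun y => (κb / ρ y) * pd i ρ y * pd j ρ y) x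
      = κb * ((pd i (pd i ρ) x * pd j ρ x + pd i ρ x * pd j (pd i ρ) x) * (ρ x)⁻¹
          + pd i ρ x * pd j ρ x * (-pd i ρ x / ρ x ^ 2)) := by
    intro i
    have e2 : (fun y => (κb / ρ y) * pd i ρ y * pd j ρ y)
        = fun y => κb * (pd i ρ y * pd j ρ y * (ρ y)⁻¹) := by
      funext y; ring
    rw [e2, pd_const_mul (((d1 i x).fun_mul (d1 j x)).fun_mul (dinv x)),
      pd_mul ((d1 i x).fun_mul (d1 j x)) (dinv x), pd_mul (d1 i x) (d1 j x),
      pd_inv (dρ x) (h0 x), pd_comm hρ2 i j x]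
  have h1 : ∑ i, pd i (fun y => (κb / ρ y) * pd i ρ y * pd j ρ y) x
      = (∑ i, pd i (pd i ρ) x) * (κb * pd j ρ x * (ρ x)⁻¹)
        + (∑ i, pd i ρ x * pd j (pd i ρ) x) * (κb * (ρ x)⁻¹)
        + (∑ i, (pd i ρ x) ^ 2) * (-(κb * pd j ρ x / ρ x ^ 2)) := by
    rw [Finset.sum_mul, Finset.sum_mul, Finset.sum_mul,
      ← Finset.sum_add_distrib, ← Finset.sum_add_distrib]
    exact Finset.sum_congr rfl fun i _ => by rw [hterm i]; ring
  -- pd j of gradsq ρ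
  have hgrad' : pd j (gradsq ρ) x = (∑ i, pd i ρ x * pd j (pd i ρ) x) * 2 := by
    show pd j (fun y => ∑ i, (pd i ρ y) ^ 2) x = _
    rw [pd_sum Finset.univ _ (fun i _ => (d1 i x).fun_pow 2), Finset.sum_mul]
    exact Finset.sum_congr rfl fun i _ => by rw [pd_sq (d1 i x)]; ring
  -- assemble
  rw [e1, pd_const_mul (dlap x), h1, hlapL, hgradL,
    pd_sub ((dlap x).fun_mul (dinv x)) ((dgrad x).fun_mul (dinv2 x)),
    pd_mul (dlap x) (dinv x), pd_mul (dgrad x) (dinv2 x),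
    pd_inv ((dρ x).fun_pow 2) (pow_ne_zero 2 (h0 x)), pd_sq (dρ x),
    pd_inv (dρ x) (h0 x), hgrad']
  show _ = κb * ρ x * ((pd j (lap ρ) x * (ρ x)⁻¹ + (∑ i, pd i (pd i ρ) x) * _
      - (_ + (∑ i, (pd i ρ x) ^ 2) * _)) + _)
  have hx := h0 x
  simp only [lap, gradsq]
  field_simp
  ring
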